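/- With parameters as above and γ = (1−ε)k − u(α+ρ), let ψ(x) = (1−η)γ L(x, z(x)) − (α+ρ)μ where L(x,v) = βx/(α0 + α1 x + α2 v + α3 x v) and z(x) = γ(λ − dx)/(μα). Then ψ(0) = −(α+ρ)μ < 0, and if γ > 0 then ψ is strictly increasing on (0, λ/d); consequently, if in addition R0 > 1 then ψ has a unique zero H* in (0, λ/d). -/

import Mathlib

theorem stmt5 (lam d β α ρ μ k a0 a1 a2 a3 η ε u : ℝ)
    (hlam : 0 < lam) (hd : 0 < d) (hβ : 0 < β) (hα : 0 < α) (hρ : 0 < ρ)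
    (hμ : 0 < μ) (hk : 0 < k) (ha0 : 0 < a0)
    (ha1 : 0 ≤ a1) (ha2 : 0 ≤ a2) (ha3 : 0 ≤ a3)
    (hη0 : 0 ≤ η) (hη1 : η < 1) (hε0 : 0 ≤ ε) (hε1 : ε < 1)
    (hu : u = 0 ∨ u = 1)
    (γ R0 : ℝ) (hγ : γ = (1 - ε) * k - u * (α + ρ))
    (hR0 : R0 = (1 - η) * (1 - ε) * k * β * (lam / d) /
        ((α + ρ) * (μ * (a0 + a1 * (lam / d)) + u * (1 - η) * β * (lam / d))))
    (L : ℝ → ℝ → ℝ)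
    (hL : ∀ x v, L x v = β * x / (a0 + a1 * x + a2 * v + a3 * x * v))
    (z ψ : ℝ → ℝ)
    (hz : ∀ x, z x = γ * (lam - d * x) / (μ * α))
    (hψ : ∀ x, ψ x = (1 - η) * γ * L x (z x) - (α + ρ) * μ) :
    ψ 0 = -((α + ρ) * μ) ∧ ψ 0 < 0 ∧
    (0 < γ → StrictMonoOn ψ (Set.Ioo 0 (lam / d))) ∧
    (0 < γ → 1 < R0 → ∃! Hs, Hs ∈ Set.Ioo 0 (lam / d) ∧ ψ Hs = 0) := by
  have hμα : 0 < μ * α := mul_pos hμ hα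
  have hΛ : 0 < lam / d := div_pos hlam hd
  have hαρμ : 0 < (α + ρ) * μ := mul_pos (by linarith) hμ
  have hψ0 : ψ 0 = -((α + ρ) * μ) := by
    rw [hψ, hL]
    simp
  have hzw : ∀ x, z x = γ / (μ * α) * (lam - d * x) := by
    intro x; rw [hz]; ring
  have hψ' : ψ = fun x => (1 - η) * γ *
      (β * x / (a0 + a1 * x + a2 * (γ / (μ * α) * (lam - d * x)) +
        a3 * x * (γ / (μ * α) * (lam - d * x)))) - (α + ρ) * μ := by
    funext x; rw [hψ, hL, hzw]
  have hDpos : 0 ≤ γ → ∀ x ∈ Set.Icc 0 (lam / d),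
      0 < a0 + a1 * x + a2 * (γ / (μ * α) * (lam - d * x)) +
        a3 * x * (γ / (μ * α) * (lam - d * x)) := by
    intro hγ0 x hx
    have hw : 0 ≤ γ / (μ * α) := div_nonneg hγ0 hμα.le
    have h1 : 0 ≤ lam - d * x := by
      have h2 := hx.2
      rw [le_div_iff₀ hd] at h2
      nlinarith
    have h2 : 0 ≤ γ / (μ * α) * (lam - d * x) := mul_nonneg hw h1
    have h3 : 0 ≤ a1 * x := mul_nonneg ha1 hx.1
    have h4 : 0 ≤ a2 * (γ / (μ * α) * (lam - d * x)) := mul_nonneg ha2 h2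
    have h5 : 0 ≤ a3 * x * (γ / (μ * α) * (lam - d * x)) :=
      mul_nonneg (mul_nonneg ha3 hx.1) h2
    linarith
  have hmono : 0 < γ → StrictMonoOn ψ (Set.Ioo 0 (lam / d)) := by
    intro hγpos
    intro x1 hx1 x2 hx2 h12
    have hD1 := hDpos hγpos.le x1 ⟨hx1.1.le, hx1.2.le⟩
    have hD2 := hDpos hγpos.le x2 ⟨hx2.1.le, hx2.2.le⟩
    rw [hψ']
    simp only
    rw [sub_lt_sub_iff_right]
    have hηγ : 0 < (1 - η) * γ := mul_pos (by linarith) hγpos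
    apply mul_lt_mul_of_pos_left _ hηγ
    rw [div_lt_div_iff₀ hD1 hD2]
    have hw : 0 ≤ γ / (μ * α) := (div_pos hγpos hμα).le
    have hs : 0 < x2 - x1 := sub_pos.2 h12
    have ha : 0 < β * ((x2 - x1) * a0) := mul_pos hβ (mul_pos hs ha0)
    have hb : 0 ≤ β * (a2 * (γ / (μ * α) * lam)) * (x2 - x1) :=
      mul_nonneg (mul_nonneg hβ.le (mul_nonneg ha2 (mul_nonneg hw hlam.le))) hs.le
    have hc : 0 ≤ β * (a3 * (γ / (μ * α) * (d * (x1 * x2)))) * (x2 - x1) :=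
      mul_nonneg (mul_nonneg hβ.le (mul_nonneg ha3 (mul_nonneg hw
        (mul_nonneg hd.le (mul_nonneg hx1.1.le (hx1.1.le.trans h12.le)))))) hs.le
    nlinarith [ha, hb, hc]
  refine ⟨hψ0, by rw [hψ0]; linarith, hmono, ?_⟩
  intro hγpos hR0gt
  have hcont : ContinuousOn ψ (Set.Icc 0 (lam / d)) := by
    rw [hψ']
    apply ContinuousOn.sub _ continuousOn_const
    apply ContinuousOn.mul continuousOn_const
    apply ContinuousOn.div (by fun_prop) (by fun_prop)
    intro x hx
    exact (hDpos hγpos.le x hx).ne'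
  have hDΛ : 0 < a0 + a1 * (lam / d) := by positivity
  have hu0 : 0 ≤ u := by rcases hu with h | h <;> rw [h] <;> norm_num
  have hden : 0 < (α + ρ) * (μ * (a0 + a1 * (lam / d)) + u * (1 - η) * β * (lam / d)) := by
    have h1 : 0 < μ * (a0 + a1 * (lam / d)) := mul_pos hμ hDΛ
    have h2 : 0 ≤ u * (1 - η) * β * (lam / d) :=
      mul_nonneg (mul_nonneg (mul_nonneg hu0 (by linarith)) hβ.le) hΛ.le
    exact mul_pos (by linarith) (by linarith)
  rw [hR0, lt_div_iff₀ hden, one_mul] at hR0gt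
  have hψΛ : 0 < ψ (lam / d) := by
    have h0 : lam - d * (lam / d) = 0 := by field_simp; ring
    rw [hψ']
    simp only [h0, mul_zero, add_zero]
    rw [sub_pos]
    have he : (1 - η) * γ * (β * (lam / d) / (a0 + a1 * (lam / d))) =
        (1 - η) * γ * (β * (lam / d)) / (a0 + a1 * (lam / d)) := by ring
    rw [he, lt_div_iff₀ hDΛ, hγ]
    nlinarith [hR0gt]
  obtain ⟨Hs, hHs, hHs0⟩ := intermediate_value_Ioo hΛ.le hcont
    (Set.mem_Ioo.2 ⟨by rw [hψ0]; linarith, hψΛ⟩)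
  refine ⟨Hs, ⟨hHs, hHs0⟩, ?_⟩
  rintro y ⟨hy, hy0⟩
  exact (hmono hγpos).injOn hy hHs (by rw [hy0, hHs0])
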